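/- arXiv:1203.4153 — 3 statements merged into one kernel-verified Lean document; each statement's English description precedes it below -/
import Mathlib

section
/- Fix b ∈ (0,1), ε with 0 < ε < min{b, 1−b}, and a finite set X ⊆ (0,∞). Let B_N be the set of portfolio states reachable from the initial state b in exactly N steps of the TRP(b,ε) dynamics. Then B_N equals the set of all values b∏_{n=1}^N u_n / ( b∏_{n=1}^N u_n + (1−b)∏_{n=1}^N v_n ) taken over sequences (u_n, v_n) ∈ X × X, n = 1, …, N, such that for every k = 1, …, N the partial state b∏_{n=1}^k u_n / ( b∏_{n=1}^k u_n + (1−b)∏_{n=1}^k v_n ) lies in (b−ε, b+ε); that is, every state reachable in N steps (possibly with rebalancings) is also the endpoint of an N-step market scenario in which the portfolio never leaves the interval (b−ε, b+ε). -/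
lemma step_eq (b P Q u v : ℝ) (hbP : 0 < b * P) (hbQ : 0 < (1 - b) * Q)
    (hu : 0 < u) (hv : 0 < v) :
    (b * P / (b * P + (1 - b) * Q)) * u /
      ((b * P / (b * P + (1 - b) * Q)) * u + (1 - b * P / (b * P + (1 - b) * Q)) * v)
    = b * (P * u) / (b * (P * u) + (1 - b) * (Q * v)) := by
  have hD : (0:ℝ) < b * P + (1 - b) * Q := by linarith
  have hD2 : (0:ℝ) < b * (P * u) + (1 - b) * (Q * v) := by nlinarith
  rw [div_eq_div_iff]
  · field_simp
    ring
  · have h1 : 1 - b * P / (b * P + (1 - b) * Q) = (1 - b) * Q / (b * P + (1 - b) * Q) := by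
      field_simp
      ring
    rw [h1]
    have : (b * P / (b * P + (1 - b) * Q)) * u + ((1 - b) * Q / (b * P + (1 - b) * Q)) * v
        = (b * (P * u) + (1 - b) * (Q * v)) / (b * P + (1 - b) * Q) := by
      field_simp
    rw [this]
    positivity
  · exact ne_of_gt hD2



/-- One step of the TRP(b,ε) dynamics: from state β, upon price relatives (u,v), move to
βu/(βu+(1−β)v) if it stays in the no-trade interval, otherwise rebalance to b. -/
noncomputable def trpStep (b ε β u v : ℝ) : ℝ :=
  if β * u / (β * u + (1 - β) * v) ∈ Set.Ioo (b - ε) (b + ε) then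
    β * u / (β * u + (1 - β) * v)
  else b

/-- The set of portfolio states reachable from the initial state b in exactly N steps of
the TRP(b,ε) dynamics with price relatives taken from X. -/
noncomputable def trpReach (b ε : ℝ) (X : Set ℝ) : ℕ → Set ℝ
  | 0 => {b}
  | N + 1 => {s : ℝ | ∃ β ∈ trpReach b ε X N, ∃ u ∈ X, ∃ v ∈ X, s = trpStep b ε β u v}

/-- Every state reachable in N steps of the TRP(b,ε) dynamics (possibly with rebalancings)
is the endpoint of an N-step market scenario in which the portfolio never leaves the
no-trade interval, and conversely. -/
theorem stmt_6 (b ε : ℝ) (hb : b ∈ Set.Ioo (0 : ℝ) 1)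
    (hε : 0 < ε) (hε' : ε < min b (1 - b))
    (X : Set ℝ) (hXfin : X.Finite) (hXpos : X ⊆ Set.Ioi (0 : ℝ)) (N : ℕ) :
    trpReach b ε X N =
      {s : ℝ | ∃ u v : ℕ → ℝ, (∀ n ∈ Finset.Icc 1 N, u n ∈ X) ∧ (∀ n ∈ Finset.Icc 1 N, v n ∈ X) ∧
        (∀ k ∈ Finset.Icc 1 N,
          b * (∏ n ∈ Finset.Icc 1 k, u n) /
            (b * (∏ n ∈ Finset.Icc 1 k, u n) + (1 - b) * (∏ n ∈ Finset.Icc 1 k, v n)) ∈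
            Set.Ioo (b - ε) (b + ε)) ∧
        s = b * (∏ n ∈ Finset.Icc 1 N, u n) /
          (b * (∏ n ∈ Finset.Icc 1 N, u n) + (1 - b) * (∏ n ∈ Finset.Icc 1 N, v n))} := by
  obtain ⟨hb0, hb1⟩ := hb
  have h1b : 0 < 1 - b := by linarith
  induction N with
  | zero =>
    ext s
    simp only [trpReach, Set.mem_singleton_iff, Set.mem_setOf_eq, Finset.Icc_self,
      Finset.Icc_eq_empty_of_lt (by norm_num : (1:ℕ) > 0)]
    constructor
    · rintro rfl
      refine ⟨fun _ => 1, fun _ => 1, by simp, by simp, by simp, by simp⟩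
    · rintro ⟨u, v, -, -, -, rfl⟩
      simp
  | succ N ih =>
    ext s
    constructor
    · rintro ⟨β, hβ, u, hu, v, hv, rfl⟩
      rw [ih] at hβ
      obtain ⟨U, V, hU, hV, hcond, hβeq⟩ := hβ
      have hupos : 0 < u := hXpos hu
      have hvpos : 0 < v := hXpos hv
      have hPU : 0 < ∏ n ∈ Finset.Icc 1 N, U n :=
        Finset.prod_pos fun n hn => hXpos (hU n hn)
      have hPV : 0 < ∏ n ∈ Finset.Icc 1 N, V n :=
        Finset.prod_pos fun n hn => hXpos (hV n hn)
      unfold trpStep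
      split_ifs with h
      · -- no rebalance: extend the scenario
        refine ⟨Function.update U (N+1) u, Function.update V (N+1) v, ?_, ?_, ?_, ?_⟩
        all_goals {
          have hprodU : ∀ k ≤ N, (∏ n ∈ Finset.Icc 1 k, Function.update U (N+1) u n)
              = ∏ n ∈ Finset.Icc 1 k, U n := by
            intro k hk
            refine Finset.prod_congr rfl fun n hn => ?_
            have : n ≠ N + 1 := by
              have := (Finset.mem_Icc.mp hn).2; omega
            simp [Function.update_of_ne this]
          have hprodV : ∀ k ≤ N, (∏ n ∈ Finset.Icc 1 k, Function.update V (N+1) v n)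
              = ∏ n ∈ Finset.Icc 1 k, V n := by
            intro k hk
            refine Finset.prod_congr rfl fun n hn => ?_
            have : n ≠ N + 1 := by
              have := (Finset.mem_Icc.mp hn).2; omega
            simp [Function.update_of_ne this]
          have htopU : (∏ n ∈ Finset.Icc 1 (N+1), Function.update U (N+1) u n)
              = (∏ n ∈ Finset.Icc 1 N, U n) * u := by
            rw [Finset.prod_Icc_succ_top (by omega)]
            rw [hprodU N le_rfl]
            simp
          have htopV : (∏ n ∈ Finset.Icc 1 (N+1), Function.update V (N+1) v n)
              = (∏ n ∈ Finset.Icc 1 N, V n) * v := by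
            rw [Finset.prod_Icc_succ_top (by omega)]
            rw [hprodV N le_rfl]
            simp
          have hkey : β * u / (β * u + (1 - β) * v)
              = b * ((∏ n ∈ Finset.Icc 1 N, U n) * u) /
                (b * ((∏ n ∈ Finset.Icc 1 N, U n) * u)
                  + (1 - b) * ((∏ n ∈ Finset.Icc 1 N, V n) * v)) := by
            rw [hβeq]
            exact step_eq b _ _ u v (by positivity) (by positivity) hupos hvpos
          first
          | (intro n hn
             rw [Finset.mem_Icc] at hn
             rcases Nat.lt_or_ge n (N+1) with hlt | hge
             · rw [Function.update_of_ne (by omega)]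
               first
               | exact hU n (Finset.mem_Icc.mpr ⟨hn.1, by omega⟩)
               | exact hV n (Finset.mem_Icc.mpr ⟨hn.1, by omega⟩)
             · have : n = N + 1 := by omega
               subst this
               simp only [Function.update_self]
               first | exact hu | exact hv)
          | (intro k hk
             rw [Finset.mem_Icc] at hk
             rcases Nat.lt_or_ge k (N+1) with hlt | hge
             · rw [hprodU k (by omega), hprodV k (by omega)]
               exact hcond k (Finset.mem_Icc.mpr ⟨hk.1, by omega⟩)
             · have : k = N + 1 := by omega
               subst this
               rw [htopU, htopV, ← hkey]
               exact h)
          | (rw [htopU, htopV]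
             exact hkey)
        }
      · -- rebalance: use a constant scenario
        refine ⟨fun _ => u, fun _ => u, fun n _ => hu, fun n _ => hu, ?_, ?_⟩
        all_goals {
          have hP : ∀ k : ℕ, (0:ℝ) < ∏ _n ∈ Finset.Icc 1 k, u :=
            fun k => Finset.prod_pos fun _ _ => hupos
          have hpart : ∀ k : ℕ, b * (∏ _n ∈ Finset.Icc 1 k, u) /
              (b * (∏ _n ∈ Finset.Icc 1 k, u) + (1 - b) * (∏ _n ∈ Finset.Icc 1 k, u)) = b := by
            intro k
            rw [show b * (∏ _n ∈ Finset.Icc 1 k, u) + (1 - b) * (∏ _n ∈ Finset.Icc 1 k, u)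
                = ∏ _n ∈ Finset.Icc 1 k, u by ring]
            field_simp
          first
          | (intro k hk
             rw [hpart k]
             constructor <;> linarith)
          | (rw [hpart (N+1)])
        }
    · rintro ⟨U, V, hU, hV, hcond, rfl⟩
      have hsub : ∀ n ∈ Finset.Icc 1 N, n ∈ Finset.Icc 1 (N+1) := by
        intro n hn; rw [Finset.mem_Icc] at *; omega
      have hPU : 0 < ∏ n ∈ Finset.Icc 1 N, U n :=
        Finset.prod_pos fun n hn => hXpos (hU n (hsub n hn))
      have hPV : 0 < ∏ n ∈ Finset.Icc 1 N, V n :=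
        Finset.prod_pos fun n hn => hXpos (hV n (hsub n hn))
      have hmem : N + 1 ∈ Finset.Icc 1 (N+1) := Finset.mem_Icc.mpr ⟨by omega, le_rfl⟩
      have hupos : 0 < U (N+1) := hXpos (hU _ hmem)
      have hvpos : 0 < V (N+1) := hXpos (hV _ hmem)
      set β := b * (∏ n ∈ Finset.Icc 1 N, U n) /
          (b * (∏ n ∈ Finset.Icc 1 N, U n) + (1 - b) * (∏ n ∈ Finset.Icc 1 N, V n)) with hβdef
      have hβmem : β ∈ trpReach b ε X N := by
        rw [ih]
        exact ⟨U, V, fun n hn => hU n (hsub n hn), fun n hn => hV n (hsub n hn),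
          fun k hk => hcond k (hsub k hk), rfl⟩
      refine ⟨β, hβmem, U (N+1), hU _ hmem, V (N+1), hV _ hmem, ?_⟩
      have htopU : (∏ n ∈ Finset.Icc 1 (N+1), U n)
          = (∏ n ∈ Finset.Icc 1 N, U n) * U (N+1) := Finset.prod_Icc_succ_top (by omega) _
      have htopV : (∏ n ∈ Finset.Icc 1 (N+1), V n)
          = (∏ n ∈ Finset.Icc 1 N, V n) * V (N+1) := Finset.prod_Icc_succ_top (by omega) _
      have hkey : β * U (N+1) / (β * U (N+1) + (1 - β) * V (N+1))
          = b * (∏ n ∈ Finset.Icc 1 (N+1), U n) /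
            (b * (∏ n ∈ Finset.Icc 1 (N+1), U n) + (1 - b) * (∏ n ∈ Finset.Icc 1 (N+1), V n)) := by
        rw [htopU, htopV, hβdef]
        exact step_eq b _ _ _ _ (by positivity) (by positivity) hupos hvpos
      unfold trpStep
      rw [hkey, if_pos (hcond (N+1) hmem)]
end

section
/- Fix b ∈ (0,1), ε with 0 < ε < min{b, 1−b}, and a finite set X ⊆ (0,∞) with |X| = K. Let B_N be the set of portfolio states reachable from the initial state b in exactly N steps of the TRP(b,ε) dynamics. Then |B_N| ≤ C(N + K² − K, N), where C denotes the binomial coefficient. -/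
/-- The basic transformation: wealth ratio p maps to portfolio state. -/
noncomputable def trpPhi (b p : ℝ) : ℝ := b * p / (b * p + (1 - b))

lemma trpPhi_one (b : ℝ) : trpPhi b 1 = b := by
  simp [trpPhi]

lemma trpPhi_step (b p u v : ℝ) (hb0 : 0 < b) (hb1 : b < 1) (hp : 0 < p)
    (hu : 0 < u) (hv : 0 < v) :
    trpPhi b p * u / (trpPhi b p * u + (1 - trpPhi b p) * v) = trpPhi b (p * (u / v)) := by
  have h1b : (0:ℝ) < 1 - b := by linarith
  have hd : (0:ℝ) < b * p + (1 - b) := add_pos (by positivity) h1b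
  have hd2 : (0:ℝ) < b * p * u + (1 - b) * v := add_pos (by positivity) (mul_pos h1b hv)
  have hd3 : (0:ℝ) < b * (p * (u / v)) + (1 - b) := add_pos (by positivity) h1b
  have h1 : trpPhi b p * u + (1 - trpPhi b p) * v = (b * p * u + (1 - b) * v) / (b * p + (1 - b)) := by
    simp only [trpPhi]
    field_simp
    ring
  rw [h1]
  simp only [trpPhi]
  field_simp

/-- Every state reachable in N steps is `trpPhi b` of a product of at most N ratios u/v with
u ≠ v from X. -/
lemma trpReach_structure (b ε : ℝ) (hb0 : 0 < b) (hb1 : b < 1) (X : Set ℝ)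
    (hXpos : X ⊆ Set.Ioi (0 : ℝ)) (N : ℕ) :
    ∀ β ∈ trpReach b ε X N, ∃ m : Multiset ℝ,
      (∀ r ∈ m, ∃ u ∈ X, ∃ v ∈ X, u ≠ v ∧ r = u / v) ∧ m.card ≤ N ∧ β = trpPhi b m.prod := by
  induction N with
  | zero =>
    intro β hβ
    refine ⟨0, by simp, by simp, ?_⟩
    simp only [trpReach, Set.mem_singleton_iff] at hβ
    simp [hβ, trpPhi_one]
  | succ N ih =>
    intro β' hβ'
    simp only [trpReach, Set.mem_setOf_eq] at hβ'
    obtain ⟨β, hβ, u, hu, v, hv, rfl⟩ := hβ'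
    obtain ⟨m, hm, hcard, rfl⟩ := ih β hβ
    have hu0 : 0 < u := hXpos hu
    have hv0 : 0 < v := hXpos hv
    have hp : 0 < m.prod := Multiset.prod_pos (fun r hr => by
      obtain ⟨a, ha, c, hc, _, rfl⟩ := hm r hr
      exact div_pos (hXpos ha) (hXpos hc))
    rw [trpStep]
    split
    · rw [trpPhi_step b m.prod u v hb0 hb1 hp hu0 hv0]
      by_cases huv : u = v
      · refine ⟨m, hm, le_trans hcard (Nat.le_succ N), ?_⟩
        rw [huv, div_self hv0.ne', mul_one]
      · refine ⟨(u / v) ::ₘ m, ?_, ?_, ?_⟩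
        · intro r hr
          rcases Multiset.mem_cons.1 hr with h | h
          · exact ⟨u, hu, v, hv, huv, h⟩
          · exact hm r h
        · simpa using Nat.succ_le_succ hcard
        · rw [Multiset.prod_cons, mul_comm]
    · exact ⟨0, by simp, by simp, by simp [trpPhi_one]⟩

/-- The number of portfolio states reachable in N steps of the TRP(b,ε) dynamics over a
K-element set of price relatives is at most C(N + K² − K, N). -/
theorem stmt_7 (b ε : ℝ) (hb : b ∈ Set.Ioo (0 : ℝ) 1)
    (hε : 0 < ε) (hε' : ε < min b (1 - b))
    (X : Set ℝ) (hXfin : X.Finite) (hXpos : X ⊆ Set.Ioi (0 : ℝ))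
    (K : ℕ) (hK : X.ncard = K) (N : ℕ) :
    (trpReach b ε X N).ncard ≤ (N + K ^ 2 - K).choose N := by
  classical
  obtain ⟨hb0, hb1⟩ := hb
  -- the finset of ratios u/v with u ≠ v
  set R : Finset ℝ := (hXfin.toFinset.offDiag).image (fun q => q.1 / q.2) with hR
  set S : Finset ℝ := insert (1 : ℝ) R with hS
  -- the counting map
  set f : Sym {x // x ∈ S} N → ℝ :=
    fun s => trpPhi b ((s.1.map Subtype.val).prod) with hf
  -- every reachable state is in the range of f
  have hsub : trpReach b ε X N ⊆ f '' Set.univ := by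
    intro β hβ
    obtain ⟨m, hm, hcard, rfl⟩ := trpReach_structure b ε hb0 hb1 X hXpos N β hβ
    set m' : Multiset ℝ := m + Multiset.replicate (N - m.card) 1 with hm'
    have hmemS : ∀ a ∈ m', a ∈ S := by
      intro a ha
      rcases Multiset.mem_add.1 ha with h | h
      · obtain ⟨u, hu, v, hv, huv, rfl⟩ := hm a h
        refine Finset.mem_insert_of_mem ?_
        exact Finset.mem_image.2 ⟨(u, v), Finset.mem_offDiag.2
          ⟨hXfin.mem_toFinset.2 hu, hXfin.mem_toFinset.2 hv, huv⟩, rfl⟩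
      · rw [Multiset.eq_of_mem_replicate h]
        exact Finset.mem_insert_self _ _
    refine ⟨⟨m'.pmap (fun a h => (⟨a, h⟩ : {x // x ∈ S})) hmemS, ?_⟩, Set.mem_univ _, ?_⟩
    · rw [Multiset.card_pmap, hm', Multiset.card_add, Multiset.card_replicate]
      omega
    · simp only [hf, Multiset.map_pmap]
      rw [Multiset.pmap_eq_map]
      simp only [Multiset.map_id']
      rw [hm', Multiset.prod_add, Multiset.prod_replicate, one_pow, mul_one]
  -- cardinality bounds
  have h1 : (trpReach b ε X N).ncard ≤ (f '' Set.univ).ncard :=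
    Set.ncard_le_ncard hsub (Set.finite_univ.image f)
  have h2 : (f '' Set.univ).ncard ≤ (Set.univ : Set (Sym {x // x ∈ S} N)).ncard :=
    Set.ncard_image_le Set.finite_univ
  have h3 : (Set.univ : Set (Sym {x // x ∈ S} N)).ncard
      = (S.card + N - 1).choose N := by
    rw [Set.ncard_univ, Nat.card_eq_fintype_card, Sym.card_sym_eq_choose,
      Fintype.card_coe]
  have hRcard : R.card ≤ K * K - K := by
    calc R.card ≤ hXfin.toFinset.offDiag.card := Finset.card_image_le
    _ = K * K - K := by
        rw [Finset.offDiag_card, ← Set.ncard_eq_toFinset_card X hXfin, hK]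
  have hScard : S.card ≤ K * K - K + 1 := by
    calc S.card ≤ R.card + 1 := Finset.card_insert_le _ _
    _ ≤ K * K - K + 1 := by omega
  have hKK : K ≤ K * K := by
    rcases Nat.eq_zero_or_pos K with h | h
    · simp [h]
    · exact Nat.le_mul_of_pos_left K h
  have hfinal : (S.card + N - 1).choose N ≤ (N + K ^ 2 - K).choose N := by
    apply Nat.choose_le_choose
    have : K ^ 2 = K * K := sq K
    omega
  exact le_trans h1 (le_trans h2 (le_trans h3.le hfinal))
end

section
/- Let α₂ < 0 < α₁ be reals, let Z ⊆ ℝ be a finite set that contains 0 and is closed under negation, let Z⁺ = { z ∈ Z : z ≥ 0 }, and let M be the set of all integer linear combinations of elements of Z⁺ (equivalently, the additive subgroup of ℝ generated by Z). Assume |z| < min{|α₁|, |α₂|} for every z ∈ Z⁺. Then for every m ∈ M ∩ (α₂, α₁) there exist N ≥ 1 and elements Z⁽¹⁾, …, Z⁽ᴺ⁾ ∈ Z such that m = ∑_{n=1}^N Z⁽ⁿ⁾ and ∑_{n=1}^k Z⁽ⁿ⁾ ∈ (α₂, α₁) for every k = 1, …, N. -/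
private lemma list_sum_nonpos : ∀ (l : List ℝ), (∀ y ∈ l, y ≤ 0) → l.sum ≤ 0
  | [], _ => by simp
  | a :: l, h => by
    simp only [List.sum_cons]
    have := list_sum_nonpos l (fun y hy => h y (List.mem_cons_of_mem _ hy))
    have := h a (List.mem_cons_self (a := a) (l := l))
    linarith

private lemma list_sum_nonneg : ∀ (l : List ℝ), (∀ y ∈ l, 0 ≤ y) → 0 ≤ l.sum
  | [], _ => by simp
  | a :: l, h => by
    simp only [List.sum_cons]
    have := list_sum_nonneg l (fun y hy => h y (List.mem_cons_of_mem _ hy))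
    have := h a (List.mem_cons_self (a := a) (l := l))
    linarith

private lemma key (α₁ α₂ : ℝ) (hα₂ : α₂ < 0) (hα₁ : 0 < α₁)
    (Z : Finset ℝ) (h0 : (0 : ℝ) ∈ Z) :
    ∀ (n : ℕ) (l : List ℝ), l.length = n →
      (∀ y ∈ l, y ∈ Z ∧ |y| < min α₁ (-α₂)) → l.sum ∈ Set.Ioo α₂ α₁ →
      ∃ N : ℕ, 1 ≤ N ∧ ∃ f : ℕ → ℝ,
        (∀ n ∈ Finset.Icc 1 N, f n ∈ Z) ∧
        l.sum = ∑ n ∈ Finset.Icc 1 N, f n ∧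
        ∀ k ∈ Finset.Icc 1 N, (∑ n ∈ Finset.Icc 1 k, f n) ∈ Set.Ioo α₂ α₁ := by
  intro n
  induction n using Nat.strong_induction_on with
  | _ n ih =>
    intro l hlen hl hio
    by_cases hm0 : l.sum = 0
    · refine ⟨1, le_refl 1, fun _ => 0, ?_, ?_, ?_⟩
      · intro n _; exact h0
      · simp [hm0]
      · intro k hk
        simp only [Finset.mem_Icc] at hk
        have : k = 1 := le_antisymm hk.2 hk.1
        subst this
        simpa using Set.mem_Ioo.mpr ⟨hα₂, hα₁⟩
    -- l.sum ≠ 0; find an element of l matching the sign of l.sum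
    · have hex : ∃ y ∈ l, (0 < l.sum ∧ 0 < y) ∨ (l.sum < 0 ∧ y < 0) := by
        rcases lt_or_gt_of_ne hm0 with hneg | hpos
        · by_contra hc
          push_neg at hc
          have : 0 ≤ l.sum := list_sum_nonneg l (by
            intro y hy
            exact (hc y hy).2 hneg)
          linarith
        · by_contra hc
          push_neg at hc
          have : l.sum ≤ 0 := list_sum_nonpos l (by
            intro y hy
            exact (hc y hy).1 hpos)
          linarith
      obtain ⟨y, hyl, hcase⟩ := hex
      have hyZ := (hl y hyl).1
      have hyabs := (hl y hyl).2
      set l' := l.erase y with hl'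
      have hsum' : y + l'.sum = l.sum := List.sum_erase hyl
      have hlen' : l'.length < n := by
        rw [← hlen]
        exact List.length_erase_of_mem hyl ▸ Nat.pred_lt (by
          rcases l with _ | ⟨a, t⟩
          · simp at hyl
          · simp)
      have hl'mem : ∀ z ∈ l', z ∈ Z ∧ |z| < min α₁ (-α₂) := fun z hz =>
        hl z (List.mem_of_mem_erase hz)
      have habs1 : y < min α₁ (-α₂) := lt_of_le_of_lt (le_abs_self y) hyabs
      have habs2 : -min α₁ (-α₂) < y := by
        have := lt_of_le_of_lt (neg_le_abs y) hyabs
        linarith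
      have hmin1 : min α₁ (-α₂) ≤ α₁ := min_le_left _ _
      have hmin2 : min α₁ (-α₂) ≤ -α₂ := min_le_right _ _
      have hio' : l'.sum ∈ Set.Ioo α₂ α₁ := by
        obtain ⟨hlo, hhi⟩ := hio
        rcases hcase with ⟨hpos, hygt⟩ | ⟨hneg, hylt⟩
        · constructor <;> nlinarith
        · constructor <;> nlinarith
      obtain ⟨N, hN1, f, hfZ, hfsum, hfpartial⟩ := ih l'.length hlen' l' rfl hl'mem hio'
      refine ⟨N + 1, by omega, fun k => if k ≤ N then f k else y, ?_, ?_, ?_⟩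
      · intro k hk
        by_cases h : k ≤ N
        · simp only [h, if_true]
          exact hfZ k (Finset.mem_Icc.mpr ⟨(Finset.mem_Icc.mp hk).1, h⟩)
        · simp only [h, if_false]; exact hyZ
      · rw [Finset.sum_Icc_succ_top (by omega : 1 ≤ N + 1)]
        have : ∑ k ∈ Finset.Icc 1 N, (if k ≤ N then f k else y) =
            ∑ k ∈ Finset.Icc 1 N, f k := by
          apply Finset.sum_congr rfl
          intro k hk
          simp [(Finset.mem_Icc.mp hk).2]
        rw [this, if_neg (by omega)]
        rw [← hfsum]
        linarith [hsum']
      · intro k hk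
        simp only [Finset.mem_Icc] at hk
        by_cases h : k ≤ N
        · have : ∑ j ∈ Finset.Icc 1 k, (if j ≤ N then f j else y) =
              ∑ j ∈ Finset.Icc 1 k, f j := by
            apply Finset.sum_congr rfl
            intro j hj
            have := (Finset.mem_Icc.mp hj).2
            simp [le_trans this h]
          rw [this]
          exact hfpartial k (Finset.mem_Icc.mpr ⟨hk.1, h⟩)
        · have hkN : k = N + 1 := by omega
          subst hkN
          rw [Finset.sum_Icc_succ_top (by omega : 1 ≤ N + 1)]
          have : ∑ j ∈ Finset.Icc 1 N, (if j ≤ N then f j else y) =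
              ∑ j ∈ Finset.Icc 1 N, f j := by
            apply Finset.sum_congr rfl
            intro j hj
            simp [(Finset.mem_Icc.mp hj).2]
          rw [this, if_neg (by omega), ← hfsum]
          have : l'.sum + y = l.sum := by linarith [hsum']
          rw [this]
          exact hio

/-- Every element of the subgroup generated by the nonnegative log-ratios that lies in the
no-trade band (α₂, α₁) is achievable as a sum of elements of Z all of whose partial sums
stay in (α₂, α₁). -/
theorem stmt_8 (α₁ α₂ : ℝ) (hα₂ : α₂ < 0) (hα₁ : 0 < α₁)
    (Z : Finset ℝ) (h0 : (0 : ℝ) ∈ Z) (hneg : ∀ z ∈ Z, -z ∈ Z)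
    (hsmall : ∀ z ∈ Z, 0 ≤ z → |z| < min |α₁| |α₂|)
    (M : AddSubgroup ℝ) (hM : M = AddSubgroup.closure {z : ℝ | z ∈ Z ∧ 0 ≤ z}) :
    ∀ m ∈ M, m ∈ Set.Ioo α₂ α₁ →
      ∃ N : ℕ, 1 ≤ N ∧ ∃ f : ℕ → ℝ,
        (∀ n ∈ Finset.Icc 1 N, f n ∈ Z) ∧
        m = ∑ n ∈ Finset.Icc 1 N, f n ∧
        ∀ k ∈ Finset.Icc 1 N, (∑ n ∈ Finset.Icc 1 k, f n) ∈ Set.Ioo α₂ α₁ := by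
  intro m hmM hmio
  have habs : min |α₁| |α₂| = min α₁ (-α₂) := by
    rw [abs_of_pos hα₁, abs_of_neg hα₂]
  subst hM
  have hmono : m ∈ AddSubmonoid.closure
      ({z : ℝ | z ∈ Z ∧ 0 ≤ z} ∪ -{z : ℝ | z ∈ Z ∧ 0 ≤ z}) := by
    rw [← AddSubgroup.closure_toAddSubmonoid]
    exact hmM
  obtain ⟨l, hlmem, hlsum⟩ := AddSubmonoid.exists_list_of_mem_closure hmono
  have hl : ∀ y ∈ l, y ∈ Z ∧ |y| < min α₁ (-α₂) := by
    intro y hy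
    rcases hlmem y hy with h | h
    · obtain ⟨h1, h2⟩ := h
      exact ⟨h1, habs ▸ hsmall y h1 h2⟩
    · obtain ⟨h1, h2⟩ := Set.mem_neg.mp h
      refine ⟨by simpa using hneg _ h1, ?_⟩
      have := hsmall _ h1 h2
      rw [habs] at this
      rwa [← abs_neg]
  subst hlsum
  exact key α₁ α₂ hα₂ hα₁ Z h0 l.length l rfl hl hmio
end
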